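/- Let G be a group with elements g₁,…,g₅ and integers t_{ijk} (1 ≤ i < j < k ≤ 5) satisfying the listed commutator relations, and assume t₁₂₃·t₃₄₅ = 0. Set r(y) = y t₁₂₃, s(y) = y t₁₂₄ + s₂(y) t₁₂₃ t₁₃₄, and t(y) = y t₁₂₅ + s₂(y)(t₁₂₃ t₁₃₅ + t₁₂₄ t₁₄₅) + s₃(y) t₁₂₃ t₁₃₄ t₁₄₅. Then for every natural number x and every integer y: g₂^x g₁^y = g₁^y g₂^x g₃^{R(x,y)} g₄^{S(x,y)} g₅^{T(x,y)}, where R(x,y) = x y t₁₂₃, S(x,y) = x y t₁₂₄ + x s₂(y) t₁₂₃ t₁₃₄ + s₂(x) y t₁₂₃ t₂₃₄, and T(x,y) = x·t(y) + s₂(x)(r(y) t₂₃₅ + s(y) t₂₄₅ + r(y) s(y) t₃₄₅) + s₂(x)·r(y)·t₂₃₄·(t₂₄₅((2x−1) − 3) + t₃₄₅((4x+1)r(y) − 3))/6. -/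

import Mathlib

def s2 (x : ℤ) : ℤ := x * (x - 1) / 2
def s3 (x : ℤ) : ℤ := x * (x - 1) * (x - 2) / 6

lemma two_dvd_aux (x : ℤ) : (2:ℤ) ∣ x * (x - 1) := by
  have h := Int.even_mul_succ_self (x - 1)
  rw [show (x-1) * (x - 1 + 1) = x * (x-1) by ring] at h
  exact h.two_dvd

lemma two_s2 (x : ℤ) : 2 * s2 x = x * (x - 1) :=
  Int.mul_ediv_cancel' (two_dvd_aux x)

lemma six_s3 (x : ℤ) : 6 * s3 x = x * (x - 1) * (x - 2) := by
  have h2 : (2:ℤ) ∣ x * (x - 1) * (x - 2) := Dvd.dvd.mul_right (two_dvd_aux x) _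
  have h3 : (3:ℤ) ∣ x * (x - 1) * (x - 2) := by
    have : x % 3 = 0 ∨ x % 3 = 1 ∨ x % 3 = 2 := by omega
    rcases this with h | h | h
    · exact dvd_mul_of_dvd_left (dvd_mul_of_dvd_left (by omega) _) _
    · exact dvd_mul_of_dvd_left (dvd_mul_of_dvd_right (by omega : (3:ℤ) ∣ x - 1) _) _
    · exact dvd_mul_of_dvd_right (by omega : (3:ℤ) ∣ x - 2) _
  have h6 : (6:ℤ) ∣ x * (x - 1) * (x - 2) := by omega
  exact Int.mul_ediv_cancel' h6

lemma s2_zero : s2 0 = 0 := by norm_num [s2]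
lemma s3_zero : s3 0 = 0 := by norm_num [s3]

lemma s2_succ (x : ℤ) : s2 (x + 1) = s2 x + x := by
  have h1 := two_s2 (x+1); have h2 := two_s2 x
  have : 2 * s2 (x+1) = 2 * (s2 x + x) := by linear_combination h1 - h2
  omega

lemma s2_pred (x : ℤ) : s2 (x - 1) = s2 x - (x - 1) := by
  have h1 := two_s2 (x-1); have h2 := two_s2 x
  have : 2 * s2 (x-1) = 2 * (s2 x - (x-1)) := by linear_combination h1 - h2
  omega

lemma s3_succ (x : ℤ) : s3 (x + 1) = s3 x + s2 x := by
  have h1 := six_s3 (x+1); have h2 := six_s3 x; have h3 := two_s2 x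
  have : 6 * s3 (x+1) = 6 * (s3 x + s2 x) := by linear_combination h1 - h2 - 3 * h3
  omega

lemma s3_pred (x : ℤ) : s3 (x - 1) = s3 x - s2 (x - 1) := by
  have h1 := six_s3 (x-1); have h2 := six_s3 x; have h3 := two_s2 (x-1)
  have : 6 * s3 (x-1) = 6 * (s3 x - s2 (x-1)) := by linear_combination h1 - h2 + 3 * h3
  omega

section GroupHelpers
variable {G : Type*} [Group G]

lemma swap_cont {x y w : G} (h : x * y = y * w) (k : G) :
    x * (y * k) = y * (w * k) := by rw [← mul_assoc, h, mul_assoc]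

lemma comm_cont {z g : G} (h : Commute z g) (k : G) : z * (g * k) = g * (z * k) :=
  swap_cont h.eq k

lemma zpow_merge (g : G) (a b : ℤ) (k : G) : g ^ a * (g ^ b * k) = g ^ (a + b) * k := by
  rw [← mul_assoc, ← zpow_add]

lemma zpow_mul_g (g : G) (a : ℤ) (k : G) : g ^ a * (g * k) = g ^ (a + 1) * k := by
  rw [← mul_assoc, ← zpow_add_one]

lemma zpow_mul_ginv (g : G) (a : ℤ) (k : G) : g ^ a * (g⁻¹ * k) = g ^ (a - 1) * k := by
  rw [← mul_assoc, ← zpow_sub_one]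

lemma g_mul_zpow (g : G) (a : ℤ) (k : G) : g * (g ^ a * k) = g ^ (a + 1) * k := by
  rw [← mul_assoc, ← zpow_one_add, add_comm]

lemma ginv_mul_zpow (g : G) (a : ℤ) (k : G) : g⁻¹ * (g ^ a * k) = g ^ (a - 1) * k := by
  rw [← mul_assoc, ← zpow_neg_one, ← zpow_add]
  congr 2
  ring

lemma conj_zpow_eq {c x y : G} (h : c⁻¹ * x * c = y) (n : ℤ) :
    c⁻¹ * x ^ n * c = y ^ n := by
  subst h
  have h2 := conj_zpow (i := n) (a := c⁻¹) (b := x)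
  rw [inv_inv] at h2
  exact h2.symm

lemma commute_of_conj {a b : G} (h : b⁻¹ * a⁻¹ * b * a = 1) : Commute a b := by
  have h2 : a * b * (b⁻¹ * a⁻¹ * b * a) = a * b * 1 := by rw [h]
  simp only [mul_assoc, mul_one, mul_inv_cancel_left, inv_mul_cancel_left] at h2
  exact h2.symm

/-- From `a⁻¹ x a = x w`, `w` commuting with `a`: `x a^m = a^m (x w^m)`. -/
lemma conj_zpow_central {a x w : G} (hwa : Commute w a)
    (h : a⁻¹ * x * a = x * w) (m : ℤ) :
    x * a ^ m = a ^ m * (x * w ^ m) := by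
  have hxa : x * a = a * (x * w) := by rw [← h]; group
  have hax : a * x = x * a * w⁻¹ := by rw [hxa]; group
  have hx : x⁻¹ * a * x = a * w⁻¹ := by rw [mul_assoc, hax]; group
  have h2 : x⁻¹ * a ^ m * x = a ^ m * w⁻¹ ^ m := by
    rw [conj_zpow_eq hx, (hwa.symm.inv_right).mul_zpow]
  rw [inv_zpow] at h2
  have h4 : a ^ m * x = x * (a ^ m * (w ^ m)⁻¹) := by rw [← h2]; group
  rw [eq_comm, ← mul_assoc, h4]
  group

/-- `b a = a b z`, `z` central ⇒ `b^n a^m = a^m (b^n z^(n m))`. -/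
lemma swap_zpow {a b z : G} (hza : Commute z a) (hzb : Commute z b)
    (h : b * a = a * b * z) (m n : ℤ) :
    b ^ n * a ^ m = a ^ m * (b ^ n * z ^ (n * m)) := by
  have h1 : a⁻¹ * b * a = b * z := by rw [mul_assoc, h]; group
  have h2 : a⁻¹ * b ^ n * a = b ^ n * z ^ n := by
    rw [conj_zpow_eq h1, hzb.symm.mul_zpow]
  have h3 := conj_zpow_central (hza.zpow_left n) h2 m
  rw [h3, ← zpow_mul]

/-- `(A B)^n = A^n B^n z^(s2 n)` when `B A = A B z` with `z` central. -/
lemma zpow_mul_class3 {A B z : G} (hza : Commute z A) (hzb : Commute z B)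
    (h : B * A = A * B * z) (n : ℤ) :
    (A * B) ^ n = A ^ n * B ^ n * z ^ s2 n := by
  have key : ∀ m : ℤ, B ^ m * A = A * (B ^ m * z ^ m) := fun m => by
    have h2 := swap_zpow hza hzb h 1 m
    simpa using h2
  have key' : ∀ m : ℤ, B ^ m * A⁻¹ = A⁻¹ * (B ^ m * z ^ (-m)) := fun m => by
    have h2 := swap_zpow hza hzb h (-1) m
    simpa [mul_comm] using h2
  induction n using Int.induction_on with
  | zero => simp [s2_zero]
  | succ i ih =>
      rw [zpow_add_one (A*B), ih, s2_succ, zpow_add_one A, zpow_add_one B]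
      simp only [mul_assoc]
      rw [comm_cont (hza.zpow_left _), (hzb.zpow_left _).eq, swap_cont (key _)]
      simp only [mul_assoc]
      rw [comm_cont (hzb.zpow_left _), ← zpow_add, add_comm ((i:ℤ)) (s2 (i:ℤ)), zpow_add]
  | pred i ih =>
      rw [zpow_sub_one (A*B), ih, s2_pred, mul_inv_rev, zpow_sub_one A, zpow_sub_one B]
      simp only [mul_assoc]
      rw [comm_cont (hzb.zpow_left _).inv_right, (hza.zpow_left _).inv_right.eq,
        zpow_mul_ginv B, swap_cont (key' _)]
      simp only [mul_assoc]
      rw [zpow_mul_ginv A, ← zpow_add,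
        show -(-(i:ℤ)-1) + s2 (-(i:ℤ)) = s2 (-(i:ℤ)) - (-(i:ℤ)-1) by ring,
        zpow_mul_ginv B, zpow_mul_ginv A]

/-- moving `x` past `c^n` in a class-3 situation:
`c⁻¹ u c = u v` (`v` central), `c⁻¹ x c = x u`. -/
lemma conj_swap_class3 {c x u v : G} (hvc : Commute v c) (hvu : Commute v u)
    (hu : c⁻¹ * u * c = u * v) (hx : c⁻¹ * x * c = x * u) (n : ℤ) :
    x * c ^ n = c ^ n * (x * (u ^ n * v ^ s2 n)) := by
  have hxc : x * c = c * (x * u) := by rw [← hx]; group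
  have hucm : ∀ m : ℤ, u ^ m * c = c * (u ^ m * v ^ m) := fun m => by
    have h2 := conj_zpow_eq hu m
    rw [hvu.symm.mul_zpow] at h2
    rw [← h2]; group
  have h0 : c * (u * v) * c⁻¹ = u := by rw [← hu]; group
  have h1 : c * (u * v) * c⁻¹ = c * u * c⁻¹ * v := by
    rw [show c * (u*v) * c⁻¹ = c * u * (v * c⁻¹) by group, hvc.inv_right.eq]; group
  have hcu : c * u * c⁻¹ = u * v⁻¹ := by
    have e : c * u * c⁻¹ = (c * (u * v) * c⁻¹) * v⁻¹ := by rw [h1]; group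
    rw [h0] at e
    exact e
  have hcuinv : c⁻¹⁻¹ * u * c⁻¹ = u * v⁻¹ := by rw [inv_inv]; exact hcu
  have hucm' : ∀ m : ℤ, u ^ m * c⁻¹ = c⁻¹ * (u ^ m * v ^ (-m)) := fun m => by
    have h2 := conj_zpow_eq hcuinv m
    rw [hvu.symm.inv_right.mul_zpow, inv_zpow, ← zpow_neg, inv_inv] at h2
    rw [← h2]; group
  have hxcinv : x * c⁻¹ = c⁻¹ * (x * (u⁻¹ * v)) := by
    have hx0 : c * (x * u) * c⁻¹ = x := by rw [← hxc]; group
    have e : c * x * c⁻¹ = (c * (x * u) * c⁻¹) * (c * u * c⁻¹)⁻¹ := by group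
    rw [hx0, hcu, mul_inv_rev, inv_inv] at e
    rw [mul_assoc, hvu.inv_right.eq] at e
    rw [← e]; group
  induction n using Int.induction_on with
  | zero => simp [s2_zero]
  | succ i ih =>
      rw [zpow_add_one c, s2_succ, ← mul_assoc, ih]
      simp only [mul_assoc]
      rw [(hvc.zpow_left _).eq, swap_cont (hucm _)]
      simp only [mul_assoc]
      rw [swap_cont hxc]
      simp only [mul_assoc]
      rw [g_mul_zpow u, ← zpow_add, add_comm ((i:ℤ)) (s2 (i:ℤ)), zpow_add]
  | pred i ih =>
      rw [zpow_sub_one c, s2_pred, ← mul_assoc, ih]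
      simp only [mul_assoc]
      rw [(hvc.zpow_left _).inv_right.eq, swap_cont (hucm' _)]
      simp only [mul_assoc]
      rw [swap_cont hxcinv]
      simp only [mul_assoc]
      rw [comm_cont (hvu.zpow_right _), ginv_mul_zpow u, g_mul_zpow v, ← zpow_add,
        show - -(i:ℤ) + 1 + s2 (-(i:ℤ)) = s2 (-(i:ℤ)) - (-(i:ℤ) - 1) by ring]

end GroupHelpers

/-- Commutation formula `g₂^x g₁^y = g₁^y g₂^x g₃^{R(x,y)} g₄^{S(x,y)} g₅^{T(x,y)}`
for natural `x` and integer `y`, assuming `t₁₂₃ t₃₄₅ = 0`. Here `r`, `s`, `t` are the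
conjugation polynomials `r(y) = y t₁₂₃`, `s(y) = y t₁₂₄ + s₂(y) t₁₂₃ t₁₃₄`, and
`t(y) = y t₁₂₅ + s₂(y)(t₁₂₃ t₁₃₅ + t₁₂₄ t₁₄₅) + s₃(y) t₁₂₃ t₁₃₄ t₁₄₅`,
and the division by `6` in `T(x,y)` is exact. -/
theorem g2_g1_power_commutation (G : Type*) [Group G] (g1 g2 g3 g4 g5 : G)
    (t123 t124 t125 t134 t135 t145 t234 t235 t245 t345 : ℤ)
    (h21 : g2⁻¹ * g1⁻¹ * g2 * g1 = g3 ^ t123 * g4 ^ t124 * g5 ^ t125)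
    (h31 : g3⁻¹ * g1⁻¹ * g3 * g1 = g4 ^ t134 * g5 ^ t135)
    (h32 : g3⁻¹ * g2⁻¹ * g3 * g2 = g4 ^ t234 * g5 ^ t235)
    (h41 : g4⁻¹ * g1⁻¹ * g4 * g1 = g5 ^ t145)
    (h42 : g4⁻¹ * g2⁻¹ * g4 * g2 = g5 ^ t245)
    (h43 : g4⁻¹ * g3⁻¹ * g4 * g3 = g5 ^ t345)
    (h51 : g5⁻¹ * g1⁻¹ * g5 * g1 = 1)
    (h52 : g5⁻¹ * g2⁻¹ * g5 * g2 = 1)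
    (h53 : g5⁻¹ * g3⁻¹ * g5 * g3 = 1)
    (h54 : g5⁻¹ * g4⁻¹ * g5 * g4 = 1)
    (hcons : t123 * t345 = 0)
    (r s t : ℤ → ℤ)
    (hr : ∀ y, r y = y * t123)
    (hs : ∀ y, s y = y * t124 + s2 y * t123 * t134)
    (ht : ∀ y, t y = y * t125 + s2 y * (t123 * t135 + t124 * t145)
                      + s3 y * t123 * t134 * t145) :
    ∀ (x : ℕ) (y : ℤ),
      g2 ^ x * g1 ^ y
        = g1 ^ y * g2 ^ x * g3 ^ ((x : ℤ) * y * t123)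
            * g4 ^ ((x : ℤ) * y * t124 + (x : ℤ) * s2 y * t123 * t134
                    + s2 (x : ℤ) * y * t123 * t234)
            * g5 ^ ((x : ℤ) * t y
                    + s2 (x : ℤ) * (r y * t235 + s y * t245 + r y * s y * t345)
                    + s2 (x : ℤ) * r y * t234
                        * (t245 * ((2 * (x : ℤ) - 1) - 3)
                           + t345 * ((4 * (x : ℤ) + 1) * r y - 3)) / 6) := by
  -- centrality of g5
  have c15 : Commute g1 g5 := commute_of_conj h51
  have c25 : Commute g2 g5 := commute_of_conj h52
  have c35 : Commute g3 g5 := commute_of_conj h53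
  have c45 : Commute g4 g5 := commute_of_conj h54
  -- single conjugation relations
  have e41 : g1⁻¹ * g4 * g1 = g4 * g5 ^ t145 := by rw [← h41]; group
  have e42 : g2⁻¹ * g4 * g2 = g4 * g5 ^ t245 := by rw [← h42]; group
  have e43 : g3⁻¹ * g4 * g3 = g4 * g5 ^ t345 := by rw [← h43]; group
  have e31 : g1⁻¹ * g3 * g1 = g3 * (g4 ^ t134 * g5 ^ t135) := by rw [← h31]; group
  have e32 : g2⁻¹ * g3 * g2 = g3 * (g4 ^ t234 * g5 ^ t235) := by rw [← h32]; group
  have e21 : g1⁻¹ * g2 * g1 = g2 * (g3 ^ t123 * (g4 ^ t124 * g5 ^ t125)) := by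
    rw [← mul_assoc (g3 ^ t123), ← h21]; group
  have s21 : g2 * g1 = g1 * (g2 * (g3 ^ t123 * (g4 ^ t124 * g5 ^ t125))) := by
    rw [← e21]; group
  have s43L : g4 * g3 = g3 * g4 * g5 ^ t345 := by rw [mul_assoc, ← e43]; group
  have s42L : g4 * g2 = g2 * g4 * g5 ^ t245 := by rw [mul_assoc, ← e42]; group
  -- power swap lemmas
  have SW43p : ∀ b a : ℤ, g4 ^ b * g3 ^ a = g3 ^ a * (g4 ^ b * g5 ^ (t345 * (b * a))) :=
    fun b a => by
      have h2 := swap_zpow ((c35.symm).zpow_left t345) ((c45.symm).zpow_left t345) s43L a b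
      rw [← zpow_mul] at h2
      exact h2
  have SW42p : ∀ b a : ℤ, g4 ^ b * g2 ^ a = g2 ^ a * (g4 ^ b * g5 ^ (t245 * (b * a))) :=
    fun b a => by
      have h2 := swap_zpow ((c25.symm).zpow_left t245) ((c45.symm).zpow_left t245) s42L a b
      rw [← zpow_mul] at h2
      exact h2
  have s41pow : ∀ a : ℤ, g4 ^ a * g1 = g1 * (g4 ^ a * g5 ^ (t145 * a)) := fun a => by
    have h2 := conj_zpow_eq e41 a
    rw [(c45.zpow_right t145).mul_zpow, ← zpow_mul] at h2
    rw [← h2]; group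
  -- the basic (g3 * g4^c g5^d)^a expansion
  have B3 : ∀ c d a : ℤ, (g3 * (g4 ^ c * g5 ^ d)) ^ a
      = g3 ^ a * (g4 ^ (c * a) * g5 ^ (d * a + t345 * (c * s2 a))) := by
    intro c d a
    have hq : g4 ^ c * g3 = g3 * (g4 ^ c * g5 ^ (t345 * c)) := by
      have h2 := SW43p c 1
      simpa using h2
    have hBA : (g4 ^ c * g5 ^ d) * g3 = g3 * (g4 ^ c * g5 ^ d) * g5 ^ (t345 * c) := by
      calc (g4 ^ c * g5 ^ d) * g3 = g4 ^ c * (g5 ^ d * g3) := mul_assoc _ _ _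
      _ = g4 ^ c * (g3 * g5 ^ d) := by rw [(c35.symm.zpow_left d).eq]
      _ = (g4 ^ c * g3) * g5 ^ d := (mul_assoc _ _ _).symm
      _ = (g3 * (g4 ^ c * g5 ^ (t345 * c))) * g5 ^ d := by rw [hq]
      _ = g3 * (g4 ^ c * g5 ^ d) * g5 ^ (t345 * c) := by
          simp only [mul_assoc, ← zpow_add]; rw [add_comm (t345 * c) d]
    have hz3 : Commute (g5 ^ (t345 * c)) g3 := (c35.symm).zpow_left _
    have hzB : Commute (g5 ^ (t345 * c)) (g4 ^ c * g5 ^ d) :=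
      (((c45.symm).zpow_left _).zpow_right _).mul_right
        (((Commute.refl g5).zpow_left _).zpow_right _)
    have h3 := zpow_mul_class3 hz3 hzB hBA a
    rw [h3, ((c45.zpow_zpow c d)).mul_zpow, ← zpow_mul, ← zpow_mul, ← zpow_mul]
    simp only [mul_assoc, ← zpow_add]
  have s31pow : ∀ a : ℤ, g3 ^ a * g1
      = g1 * (g3 ^ a * (g4 ^ (t134 * a) * g5 ^ (t135 * a + t345 * (t134 * s2 a)))) :=
    fun a => by
      have h2 := conj_zpow_eq e31 a
      rw [B3 t134 t135 a] at h2
      rw [← h2]; group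
  -- two-parameter swap of g3-powers past g2-powers
  have SW32p : ∀ m a : ℤ, g3 ^ a * g2 ^ m
      = g2 ^ m * (g3 ^ a * (g4 ^ (t234 * m * a)
          * g5 ^ ((t235 * m + t245 * t234 * s2 m) * a + t345 * (t234 * m * s2 a)))) := by
    intro m a
    have hu : g2⁻¹ * (g4 ^ t234 * g5 ^ t235) * g2
        = (g4 ^ t234 * g5 ^ t235) * g5 ^ (t245 * t234) := by
      have h2 := conj_zpow_eq e42 t234
      rw [(c45.zpow_right t245).mul_zpow, ← zpow_mul] at h2
      calc g2⁻¹ * (g4 ^ t234 * g5 ^ t235) * g2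
          = (g2⁻¹ * g4 ^ t234 * g2) * (g2⁻¹ * g5 ^ t235 * g2) := by group
        _ = (g4 ^ t234 * g5 ^ (t245 * t234)) * (g5 ^ t235) := by
            rw [h2, mul_assoc g2⁻¹, (c25.symm.zpow_left t235).eq]; group
        _ = (g4 ^ t234 * g5 ^ t235) * g5 ^ (t245 * t234) := by
            simp only [mul_assoc, ← zpow_add]; rw [add_comm (t245 * t234) t235]
    have hvc : Commute (g5 ^ (t245 * t234)) g2 := (c25.symm).zpow_left _
    have hvu : Commute (g5 ^ (t245 * t234)) (g4 ^ t234 * g5 ^ t235) :=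
      (((c45.symm).zpow_left _).zpow_right _).mul_right
        (((Commute.refl g5).zpow_left _).zpow_right _)
    have base := conj_swap_class3 hvc hvu hu e32 m
    have h2 : (g2 ^ m)⁻¹ * g3 * g2 ^ m
        = g3 * ((g4 ^ t234 * g5 ^ t235) ^ m * (g5 ^ (t245 * t234)) ^ s2 m) := by
      rw [mul_assoc, base]; group
    have h3 := conj_zpow_eq h2 a
    rw [(c45.zpow_zpow t234 t235).mul_zpow, ← zpow_mul, ← zpow_mul, ← zpow_mul] at h3
    rw [show g4 ^ (t234 * m) * g5 ^ (t235 * m) * g5 ^ (t245 * t234 * s2 m)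
        = g4 ^ (t234 * m) * g5 ^ (t235 * m + t245 * t234 * s2 m) by
        simp only [mul_assoc, ← zpow_add]] at h3
    rw [B3 (t234 * m) (t235 * m + t245 * t234 * s2 m) a] at h3
    rw [← h3]
    group
  -- consequences of hcons
  have haux : ∀ v : ℤ, s2 (v * t123) * t345 = 0 := fun v => by
    have h1 := two_s2 (v * t123)
    have h2 : 2 * (s2 (v * t123) * t345) = 0 := by
      linear_combination t345 * h1 + (v * (v * t123 - 1)) * hcons
    omega
  -- the single-step core of the y-induction
  have core : ∀ w : ℤ, (g2 * (g3 ^ r w * (g4 ^ s w * g5 ^ t w))) * g1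
      = g1 * (g2 * (g3 ^ r (w + 1) * (g4 ^ s (w + 1) * g5 ^ t (w + 1)))) := by
    intro w
    simp only [mul_assoc]
    rw [(c15.symm.zpow_left (t w)).eq]
    rw [swap_cont (s41pow (s w))]
    simp only [mul_assoc]
    rw [swap_cont (s31pow (r w))]
    simp only [mul_assoc]
    rw [swap_cont s21]
    simp only [mul_assoc]
    rw [comm_cont ((c35.symm).zpow_zpow t125 (r w))]
    rw [swap_cont (SW43p t124 (r w))]
    simp only [mul_assoc]
    rw [zpow_merge g3]
    rw [zpow_merge g5]
    rw [comm_cont ((c45.symm).zpow_zpow _ _)]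
    rw [zpow_merge g4]
    rw [zpow_merge g5]
    rw [comm_cont ((c45.symm).zpow_zpow _ _)]
    rw [zpow_merge g4]
    rw [zpow_merge g5]
    rw [← zpow_add]
    rw [show t123 + r w = r (w + 1) by rw [hr w, hr (w + 1)]; ring,
      show t124 + t134 * r w + s w = s (w + 1) by
        rw [hr w, hs w, hs (w + 1), s2_succ]; ring,
      show t345 * (t124 * r w) + t125 + (t135 * r w + t345 * (t134 * s2 (r w)))
          + t145 * s w + t w = t (w + 1) by
        rw [hr w, hs w, ht w, ht (w + 1), s2_succ, s3_succ]
        linear_combination (t124 * w) * hcons + t134 * haux w]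
  have conj21 : ∀ w : ℤ, g2 * g1 ^ w
      = g1 ^ w * (g2 * (g3 ^ r w * (g4 ^ s w * g5 ^ t w))) := by
    intro w
    induction w using Int.induction_on with
    | zero => rw [hr, hs, ht]; simp [s2_zero, s3_zero]
    | succ i ih =>
        rw [show g2 * g1 ^ ((i:ℤ) + 1) = g2 * g1 ^ (i:ℤ) * g1 by
          rw [zpow_add_one]; group]
        rw [ih, mul_assoc, core (i:ℤ), zpow_mul_g]
    | pred i ih =>
        have h1 : (g1 ^ (-(i:ℤ) - 1) * (g2 * (g3 ^ r (-(i:ℤ) - 1)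
            * (g4 ^ s (-(i:ℤ) - 1) * g5 ^ t (-(i:ℤ) - 1))))) * g1
            = g2 * g1 ^ (-(i:ℤ)) := by
          rw [mul_assoc, core _, zpow_mul_g,
            show -(i:ℤ) - 1 + 1 = -(i:ℤ) by ring, ← ih]
        have h2 : g2 * g1 ^ (-(i:ℤ) - 1) * g1
            = (g1 ^ (-(i:ℤ) - 1) * (g2 * (g3 ^ r (-(i:ℤ) - 1)
              * (g4 ^ s (-(i:ℤ) - 1) * g5 ^ t (-(i:ℤ) - 1))))) * g1 := by
          rw [mul_assoc, ← zpow_add_one, show -(i:ℤ) - 1 + 1 = -(i:ℤ) by ring, h1]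
        exact mul_right_cancel h2
  intro x0 y0
  have claim : ∀ (x : ℕ), g2 ^ (x:ℤ) * g1 ^ y0
      = g1 ^ y0 * (g2 ^ (x:ℤ) * (g3 ^ ((x:ℤ) * r y0)
        * (g4 ^ ((x:ℤ) * s y0 + s2 (x:ℤ) * (r y0 * t234))
          * g5 ^ ((x:ℤ) * t y0 + s2 (x:ℤ) * (r y0 * t235 + s y0 * t245)
              + s3 (x:ℤ) * (r y0 * t234 * t245))))) := by
    intro x
    induction x with
    | zero => norm_num [s2_zero, s3_zero]
    | succ n ih =>
        push_cast
        rw [show g2 ^ ((n:ℤ) + 1) * g1 ^ y0 = g2 * (g2 ^ (n:ℤ) * g1 ^ y0) by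
          rw [zpow_add_one]; group]
        rw [ih, ← mul_assoc, conj21 y0]
        simp only [mul_assoc]
        rw [comm_cont ((c25.symm).zpow_zpow (t y0) (n:ℤ))]
        rw [swap_cont (SW42p (s y0) (n:ℤ))]
        simp only [mul_assoc]
        rw [swap_cont (SW32p (n:ℤ) (r y0))]
        simp only [mul_assoc]
        rw [g_mul_zpow g2]
        rw [comm_cont ((c45.symm).zpow_zpow _ _)]
        rw [zpow_merge g4]
        rw [zpow_merge g5]
        rw [zpow_merge g5]
        rw [comm_cont ((c35.symm).zpow_zpow _ _)]
        rw [swap_cont (SW43p _ _)]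
        simp only [mul_assoc]
        rw [zpow_merge g3]
        rw [zpow_merge g5]
        rw [comm_cont ((c45.symm).zpow_zpow _ _)]
        rw [zpow_merge g4]
        rw [← zpow_add]
        rw [show r y0 + (n:ℤ) * r y0 = ((n:ℤ) + 1) * r y0 by ring]
        rw [show t234 * ((n:ℤ) * r y0) + s y0 + ((n:ℤ) * s y0 + s2 (n:ℤ) * (r y0 * t234))
            = ((n:ℤ) + 1) * s y0 + s2 ((n:ℤ) + 1) * (r y0 * t234) by rw [s2_succ]; ring]
        rw [show t345 * ((t234 * ((n:ℤ) * r y0) + s y0) * ((n:ℤ) * r y0)) +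
              ((t235 * (n:ℤ) + t245 * (t234 * s2 (n:ℤ))) * r y0
                + t345 * (t234 * ((n:ℤ) * s2 (r y0))) + t245 * (s y0 * (n:ℤ)) + t y0) +
              ((n:ℤ) * t y0 + s2 (n:ℤ) * (r y0 * t235 + s y0 * t245)
                + s3 (n:ℤ) * (r y0 * (t234 * t245)))
            = ((n:ℤ) + 1) * t y0 + s2 ((n:ℤ) + 1) * (r y0 * t235 + s y0 * t245)
              + s3 ((n:ℤ) + 1) * (r y0 * (t234 * t245)) by
          rw [s2_succ, s3_succ, hr y0]
          linear_combination (t234 * (n:ℤ)^2 * y0^2 * t123 + s y0 * (n:ℤ) * y0) * hcons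
            + (t234 * (n:ℤ)) * haux y0]
  have h345 : r y0 * t345 = 0 := by rw [hr]; linear_combination y0 * hcons
  have key : s2 (x0:ℤ) * (2 * (x0:ℤ) - 4) = 6 * s3 (x0:ℤ) := by
    linear_combination ((x0:ℤ) - 2) * two_s2 (x0:ℤ) - six_s3 (x0:ℤ)
  have hD : s2 (x0:ℤ) * r y0 * t234 * (t245 * ((2 * (x0:ℤ) - 1) - 3)
        + t345 * ((4 * (x0:ℤ) + 1) * r y0 - 3))
      = 6 * (s3 (x0:ℤ) * (r y0 * (t234 * t245))) := by
    rw [hr]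
    linear_combination (t234 * t245 * (y0 * t123)) * key
      + (s2 (x0:ℤ) * y0 * t234 * ((4 * (x0:ℤ) + 1) * (y0 * t123) - 3)) * hcons
  have e5 : (x0:ℤ) * t y0
        + s2 (x0:ℤ) * (r y0 * t235 + s y0 * t245 + r y0 * s y0 * t345)
        + s2 (x0:ℤ) * r y0 * t234 * (t245 * ((2 * (x0:ℤ) - 1) - 3)
            + t345 * ((4 * (x0:ℤ) + 1) * r y0 - 3)) / 6
      = (x0:ℤ) * t y0 + s2 (x0:ℤ) * (r y0 * t235 + s y0 * t245)
        + s3 (x0:ℤ) * (r y0 * (t234 * t245)) := by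
    rw [hD, Int.mul_ediv_cancel_left _ (show (6:ℤ) ≠ 0 by norm_num)]
    linear_combination (s2 (x0:ℤ) * s y0) * h345
  rw [show (x0:ℤ) * y0 * t123 = (x0:ℤ) * r y0 by rw [hr]; ring,
    show (x0:ℤ) * y0 * t124 + (x0:ℤ) * s2 y0 * t123 * t134 + s2 (x0:ℤ) * y0 * t123 * t234
      = (x0:ℤ) * s y0 + s2 (x0:ℤ) * (r y0 * t234) by rw [hs, hr]; ring,
    e5]
  simp only [mul_assoc]
  rw [← zpow_natCast g2 x0, show r y0 * (t234 * t245) = r y0 * t234 * t245 by ring]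
  exact claim x0
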